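/- A formula A is satisfiable (true under some valuation) if and only if some clique of A contains no complementary pair of literals. -/
import Mathlib


/-- Literals: propositional variables and their negations. -/
inductive Lit where
  | pos : Nat → Lit
  | neg : Nat → Lit
deriving DecidableEq

/-- Formulas of classical propositional logic, built from literals by binary ∧ and ∨. -/
inductive Formula where
  | lit : Lit → Formula
  | and : Formula → Formula → Formula
  | or  : Formula → Formula → Formula

/-- Leaves of the parse tree, identified by their positions (paths: `false` = left,
`true` = right). -/
def Formula.leaves : Formula → Set (List Bool)
  | .lit _ => {[]}
  | .and A B => (fun p => false :: p) '' A.leaves ∪ (fun p => true :: p) '' B.leaves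
  | .or A B  => (fun p => false :: p) '' A.leaves ∪ (fun p => true :: p) '' B.leaves

/-- The literal labelling the leaf at a given path, if any. -/
def Formula.labelAt : Formula → List Bool → Option Lit
  | .lit l, [] => some l
  | .and A B, b :: p => if b then B.labelAt p else A.labelAt p
  | .or A B, b :: p => if b then B.labelAt p else A.labelAt p
  | _, _ => none

/-- ∨-resolutions of a formula: delete one argument subtree at each ∨-vertex. -/
inductive Res : Formula → Type where
  | lit : (l : Lit) → Res (.lit l)
  | and : {A B : Formula} → Res A → Res B → Res (.and A B)
  | orL : {A B : Formula} → Res A → Res (.or A B)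
  | orR : {A B : Formula} → Res B → Res (.or A B)

/-- The set of leaves of `A` retained by an ∨-resolution. -/
def Res.leafSet : {A : Formula} → Res A → Set (List Bool)
  | _, .lit _ => {[]}
  | _, .and ra rb => (fun p => false :: p) '' ra.leafSet ∪ (fun p => true :: p) '' rb.leafSet
  | _, .orL ra => (fun p => false :: p) '' ra.leafSet
  | _, .orR rb => (fun p => true :: p) '' rb.leafSet

/-- Cliques: leaf sets of ∨-resolutions. -/
def Formula.cliques (A : Formula) : Set (Set (List Bool)) :=
  {L | ∃ r : Res A, r.leafSet = L}

/-- ∧-resolutions of a formula: delete one argument subtree at each ∧-vertex. -/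
inductive CoRes : Formula → Type where
  | lit : (l : Lit) → CoRes (.lit l)
  | or : {A B : Formula} → CoRes A → CoRes B → CoRes (.or A B)
  | andL : {A B : Formula} → CoRes A → CoRes (.and A B)
  | andR : {A B : Formula} → CoRes B → CoRes (.and A B)

/-- The set of leaves of `A` retained by an ∧-resolution. -/
def CoRes.leafSet : {A : Formula} → CoRes A → Set (List Bool)
  | _, .lit _ => {[]}
  | _, .or ra rb => (fun p => false :: p) '' ra.leafSet ∪ (fun p => true :: p) '' rb.leafSet
  | _, .andL ra => (fun p => false :: p) '' ra.leafSet
  | _, .andR rb => (fun p => true :: p) '' rb.leafSet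

/-- Co-cliques: leaf sets of ∧-resolutions. -/
def Formula.cocliques (A : Formula) : Set (Set (List Bool)) :=
  {M | ∃ r : CoRes A, r.leafSet = M}

/-- Truth of a literal under a valuation. -/
def Lit.eval (v : Nat → Bool) : Lit → Bool
  | .pos n => v n
  | .neg n => !(v n)

/-- Standard Boolean semantics. -/
def Formula.eval (v : Nat → Bool) : Formula → Bool
  | .lit l => l.eval v
  | .and A B => A.eval v && B.eval v
  | .or A B => A.eval v || B.eval v

/-- Number of ∨-vertices in the parse tree. -/
def Formula.orCount : Formula → Nat
  | .lit _ => 0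
  | .and A B => A.orCount + B.orCount
  | .or A B => A.orCount + B.orCount + 1

/-- Number of ∧-vertices in the parse tree. -/
def Formula.andCount : Formula → Nat
  | .lit _ => 0
  | .and A B => A.andCount + B.andCount + 1
  | .or A B => A.andCount + B.andCount

/-- Complement of a literal. -/
def Lit.compl : Lit → Lit
  | .pos n => .neg n
  | .neg n => .pos n

/-- De Morgan dual: swap ∧ with ∨ and negate every literal. -/
def Formula.dual : Formula → Formula
  | .lit l => .lit l.compl
  | .and A B => .or A.dual B.dual
  | .or A B => .and A.dual B.dual

lemma res_of_eval (v : Nat → Bool) : ∀ A : Formula, A.eval v = true →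
    ∃ r : Res A, ∀ p ∈ r.leafSet, ∀ l, A.labelAt p = some l → l.eval v = true := by
  intro A
  induction A with
  | lit l =>
    intro h
    refine ⟨.lit l, ?_⟩
    intro p hp l' hl'
    simp only [Res.leafSet, Set.mem_singleton_iff] at hp
    subst hp
    simp only [Formula.labelAt, Option.some.injEq] at hl'
    subst hl'
    exact h
  | and A B ihA ihB =>
    intro h
    simp only [Formula.eval, Bool.and_eq_true] at h
    obtain ⟨ra, ha⟩ := ihA h.1
    obtain ⟨rb, hb⟩ := ihB h.2
    refine ⟨.and ra rb, ?_⟩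
    intro p hp l hl
    rcases hp with ⟨p', hp', rfl⟩ | ⟨p', hp', rfl⟩
    · exact ha p' hp' l (by simpa [Formula.labelAt] using hl)
    · exact hb p' hp' l (by simpa [Formula.labelAt] using hl)
  | or A B ihA ihB =>
    intro h
    simp only [Formula.eval, Bool.or_eq_true] at h
    rcases h with h | h
    · obtain ⟨ra, ha⟩ := ihA h
      refine ⟨.orL ra, ?_⟩
      intro p hp l hl
      rcases hp with ⟨p', hp', rfl⟩
      exact ha p' hp' l (by simpa [Formula.labelAt] using hl)
    · obtain ⟨rb, hb⟩ := ihB h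
      refine ⟨.orR rb, ?_⟩
      intro p hp l hl
      rcases hp with ⟨p', hp', rfl⟩
      exact hb p' hp' l (by simpa [Formula.labelAt] using hl)

lemma eval_of_res (v : Nat → Bool) : ∀ (A : Formula) (r : Res A),
    (∀ p ∈ r.leafSet, ∀ l, A.labelAt p = some l → l.eval v = true) → A.eval v = true := by
  intro A r
  induction r with
  | lit l =>
    intro h
    exact h [] rfl l rfl
  | @and A B ra rb ihA ihB =>
    intro h
    simp only [Formula.eval, Bool.and_eq_true]
    constructor
    · exact ihA fun p hp l hl =>
        h (false :: p) (Or.inl ⟨p, hp, rfl⟩) l (by simpa [Formula.labelAt] using hl)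
    · exact ihB fun p hp l hl =>
        h (true :: p) (Or.inr ⟨p, hp, rfl⟩) l (by simpa [Formula.labelAt] using hl)
  | @orL A B ra ihA =>
    intro h
    simp only [Formula.eval, Bool.or_eq_true]
    exact Or.inl <| ihA fun p hp l hl =>
      h (false :: p) ⟨p, hp, rfl⟩ l (by simpa [Formula.labelAt] using hl)
  | @orR A B rb ihB =>
    intro h
    simp only [Formula.eval, Bool.or_eq_true]
    exact Or.inr <| ihB fun p hp l hl =>
      h (true :: p) ⟨p, hp, rfl⟩ l (by simpa [Formula.labelAt] using hl)

lemma label_of_mem : ∀ (A : Formula) (r : Res A), ∀ p ∈ r.leafSet,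
    ∃ l, A.labelAt p = some l := by
  intro A r
  induction r with
  | lit l =>
    intro p hp
    simp only [Res.leafSet, Set.mem_singleton_iff] at hp
    subst hp
    exact ⟨l, rfl⟩
  | @and A B ra rb ihA ihB =>
    intro p hp
    rcases hp with ⟨p', hp', rfl⟩ | ⟨p', hp', rfl⟩
    · obtain ⟨l, hl⟩ := ihA p' hp'
      exact ⟨l, by simpa [Formula.labelAt] using hl⟩
    · obtain ⟨l, hl⟩ := ihB p' hp'
      exact ⟨l, by simpa [Formula.labelAt] using hl⟩
  | @orL A B ra ihA =>
    intro p hp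
    rcases hp with ⟨p', hp', rfl⟩
    obtain ⟨l, hl⟩ := ihA p' hp'
    exact ⟨l, by simpa [Formula.labelAt] using hl⟩
  | @orR A B rb ihB =>
    intro p hp
    rcases hp with ⟨p', hp', rfl⟩
    obtain ⟨l, hl⟩ := ihB p' hp'
    exact ⟨l, by simpa [Formula.labelAt] using hl⟩

theorem satisfiable_iff_clique (A : Formula) :
    (∃ v : Nat → Bool, A.eval v = true) ↔
      ∃ L ∈ A.cliques, ¬ ∃ p ∈ L, ∃ q ∈ L, ∃ n : Nat,
        A.labelAt p = some (.pos n) ∧ A.labelAt q = some (.neg n) := by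
  constructor
  · rintro ⟨v, hv⟩
    obtain ⟨r, hr⟩ := res_of_eval v A hv
    refine ⟨r.leafSet, ⟨r, rfl⟩, ?_⟩
    rintro ⟨p, hp, q, hq, n, hpn, hqn⟩
    have h1 := hr p hp _ hpn
    have h2 := hr q hq _ hqn
    simp [Lit.eval] at h1 h2
    rw [h1] at h2
    exact absurd h2 (by simp)
  · rintro ⟨L, ⟨r, rfl⟩, hL⟩
    classical
    set v : Nat → Bool := fun n =>
      if ∃ p ∈ r.leafSet, A.labelAt p = some (.pos n) then true else false with hv
    refine ⟨v, eval_of_res v A r ?_⟩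
    intro p hp l hl
    cases l with
    | pos n =>
      simp only [Lit.eval, hv]
      rw [if_pos ⟨p, hp, hl⟩]
    | neg n =>
      simp only [Lit.eval, hv]
      rw [if_neg]
      · rfl
      · rintro ⟨q, hq, hqn⟩
        exact hL ⟨q, hq, p, hp, n, hqn, hl⟩
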